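/- For any normed BPA system G = (V, Act, R) and α, γ ∈ V*: if α is a redundancy-free prefix of αγ (i.e. α cannot be written as δXβ with Xβγ ~ βγ), then ‖αγ‖_cc ≥ |α| + ‖γ‖_cc (with the convention n + ω = ω), where ‖·‖_cc is the class-change norm in L_G and |α| is the length of α. -/

import Mathlib

/-! Common definitions: labelled transition systems, branching bisimulation,
branching bisimilarity, silent states, class-change norm, BPA systems,
right-to-left finite transducers. -/

/-- A τ-path `t = t₀ →τ t₁ →τ ⋯ →τ t_k` in which every state after `t₀`
is related to `s` by `B`. -/
inductive TauSeq {S Act : Type} (tr : S → Act → S → Prop) (τ : Act)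
    (B : S → S → Prop) (s : S) : S → S → Prop
  | refl (t : S) : TauSeq tr τ B s t t
  | step {t t' t'' : S} : tr t τ t' → B s t' → TauSeq tr τ B s t' t'' →
      TauSeq tr τ B s t t''

/-- `B` is a branching bisimulation in the LTS given by `tr` with silent action `τ`. -/
def IsBranchingBisim {S Act : Type} (tr : S → Act → S → Prop) (τ : Act)
    (B : S → S → Prop) : Prop :=
  ∀ s t, B s t →
    (∀ a s', tr s a s' →
      ((a = τ ∧ B s' t) ∨
        ∃ tk t', TauSeq tr τ B s t tk ∧ tr tk a t' ∧ B s' t')) ∧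
    (∀ a t', tr t a t' →
      ((a = τ ∧ B s t') ∨
        ∃ sk s', TauSeq tr τ (fun u v => B v u) t s sk ∧ tr sk a s' ∧ B s' t'))

/-- Branching bisimilarity: `s ~ t` iff some branching bisimulation contains `(s,t)`. -/
def BBisim {S Act : Type} (tr : S → Act → S → Prop) (τ : Act) (s t : S) : Prop :=
  ∃ B, IsBranchingBisim tr τ B ∧ B s t

/-- `Steps tr s w t`: there is a path from `s` to `t` labelled by the word `w`. -/
inductive Steps {S Act : Type} (tr : S → Act → S → Prop) : S → List Act → S → Prop
  | refl (s : S) : Steps tr s [] s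
  | step {s : S} {a : Act} {s' : S} {w : List Act} {t : S} :
      tr s a s' → Steps tr s' w t → Steps tr s (a :: w) t

/-- A state is silent if only τ-labelled words can be performed from it. -/
def SilentState {S Act : Type} (tr : S → Act → S → Prop) (τ : Act) (s : S) : Prop :=
  ∀ w s', Steps tr s w s' → ∀ a ∈ w, a = τ

/-- A τ-path in which no transition is class-changing (each step stays in the same
`~`-class). -/
inductive TauNC {S Act : Type} (tr : S → Act → S → Prop) (τ : Act) : S → S → Prop
  | refl (t : S) : TauNC tr τ t t
  | step {t t' t'' : S} : tr t τ t' → BBisim tr τ t t' → TauNC tr τ t' t'' →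
      TauNC tr τ t t''

/-- `CCPath tr τ s n t`: there is a path from `s` to `t` containing exactly `n`
class-changing transitions. -/
inductive CCPath {S Act : Type} (tr : S → Act → S → Prop) (τ : Act) : S → ℕ → S → Prop
  | refl (s : S) : CCPath tr τ s 0 s
  | stepEq {s : S} {a : Act} {s' : S} {n : ℕ} {t : S} :
      tr s a s' → BBisim tr τ s s' → CCPath tr τ s' n t → CCPath tr τ s n t
  | stepNe {s : S} {a : Act} {s' : S} {n : ℕ} {t : S} :
      tr s a s' → ¬ BBisim tr τ s s' → CCPath tr τ s' n t → CCPath tr τ s (n + 1) t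

/-- The class-change norm: the least number of class-changing transitions on a path
to a silent state; `⊤` (ω) if no silent state is reachable. -/
noncomputable def ccNorm {S Act : Type} (tr : S → Act → S → Prop) (τ : Act) (s : S) : ℕ∞ :=
  sInf {n : ℕ∞ | ∃ ℓ : ℕ, n = (ℓ : ℕ∞) ∧ ∃ t, CCPath tr τ s ℓ t ∧ SilentState tr τ t}

/-- A BPA system: a finite set of rules `A →a α` (a context-free grammar in
Greibach normal form, no starting variable). -/
structure BPA (V Act : Type) where
  rules : Finset (V × Act × List V)

/-- The transition relation of the LTS `L_G` associated with a BPA system `G`: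
`Aβ →a γβ` whenever `A →a γ` is a rule. -/
def BPA.tr {V Act : Type} (G : BPA V Act) : List V → Act → List V → Prop :=
  fun s a t => ∃ (A : V) (γ β : List V), (A, a, γ) ∈ G.rules ∧ s = A :: β ∧ t = γ ++ β

/-- The (standard, syntactic) norm of a process: the length of a shortest word
leading to the empty process; `⊤` (ω) if there is none. -/
noncomputable def BPA.norm {V Act : Type} (G : BPA V Act) (α : List V) : ℕ∞ :=
  sInf {n : ℕ∞ | ∃ w : List Act, n = (w.length : ℕ∞) ∧ Steps G.tr α w []}

/-- A BPA system is normed if every variable has a finite norm. -/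
def BPA.Normed {V Act : Type} (G : BPA V Act) : Prop :=
  ∀ A : V, G.norm [A] ≠ ⊤

/-- The transition relation of `L_{G,R}`: as `L_G`, but all outgoing transitions of
states in `R*` are removed. -/
def BPA.trR {V Act : Type} (G : BPA V Act) (R : Set V) : List V → Act → List V → Prop :=
  fun s a t => G.tr s a t ∧ ¬ (∀ X ∈ s, X ∈ R)

/-- `R_γ`: the set of variables redundant w.r.t. `γ`, i.e. those `X` with `Xγ ~ γ`. -/
def RedSet {V Act : Type} (G : BPA V Act) (τ : Act) (γ : List V) : Set V :=
  {X : V | BBisim G.tr τ (X :: γ) γ}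

/-- `α` is a redundancy-free prefix of `αγ`: it cannot be written as `δXβ` with
`Xβγ ~ βγ`. -/
def RedFreePrefix {V Act : Type} (G : BPA V Act) (τ : Act) (α γ : List V) : Prop :=
  ¬ ∃ (δ : List V) (X : V) (β : List V),
      α = δ ++ X :: β ∧ BBisim G.tr τ (X :: (β ++ γ)) (β ++ γ)

/-- A finite-state transducer reading (and writing) from right to left. -/
structure Transducer (Q V : Type) where
  delta : Q → V → Q × List V
  q0 : Q

/-- Running the transducer on an input string, right to left:
`T.run α q = (q', β)` means `q' ⇐α|β= q`. -/
def Transducer.run {Q V : Type} (T : Transducer Q V) : List V → Q → Q × List V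
  | [], q => (q, [])
  | A :: α, q =>
      let p := T.run α q
      ((T.delta p.1 A).1, (T.delta p.1 A).2 ++ p.2)

/-- `T_q(α)`: the output of `T` on input `α`, started in state `q`. -/
def Transducer.out {Q V : Type} (T : Transducer Q V) (q : Q) (α : List V) : List V :=
  (T.run α q).2

/-- `q`-normal forms: `ε ∈ NF_q`, and `αA ∈ NF_q` iff `A` is a `q`-prime and
`α` is a `q'`-normal form where `q' ⇐A|A= q`. -/
inductive Transducer.NF {Q V : Type} (T : Transducer Q V) : Q → List V → Prop
  | nil (q : Q) : Transducer.NF T q []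
  | snoc {q : Q} {A : V} {α : List V} :
      (T.delta q A).2 = [A] → Transducer.NF T (T.delta q A).1 α →
      Transducer.NF T q (α ++ [A])

/-- A normal-form-computing (nfc) transducer: each `T_q(A)` is a `q`-normal form,
and `q' ⇐A|γ= q` implies `q' ⇐γ|γ= q`. -/
def Transducer.IsNFC {Q V : Type} (T : Transducer Q V) : Prop :=
  ∀ (q : Q) (A : V),
    Transducer.NF T q (T.delta q A).2 ∧ T.run (T.delta q A).2 q = T.delta q A

/-- A τ-path in `L_G` along which the `T_q`-output stays constant. -/
inductive ConstTauSeq {Q V Act : Type} (tr : List V → Act → List V → Prop) (τ : Act)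
    (T : Transducer Q V) (q : Q) : List V → List V → Prop
  | refl (α : List V) : ConstTauSeq tr τ T q α α
  | step {α α' α'' : List V} : tr α τ α' → T.out q α' = T.out q α →
      ConstTauSeq tr τ T q α' α'' → ConstTauSeq tr τ T q α α''

/-- The long move `α ⇒a_q β`. -/
def BigStep {Q V Act : Type} (G : BPA V Act) (τ : Act) (T : Transducer Q V) (q : Q)
    (α : List V) (a : Act) (β : List V) : Prop :=
  (a = τ ∧ β = T.out q α) ∨
  ∃ αk β', ConstTauSeq G.tr τ T q α αk ∧ G.tr αk a β' ∧ β = T.out q β'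

/-- The equivalence `α₁ ≈_q α₂`: the same long moves are available. -/
def TApprox {Q V Act : Type} (G : BPA V Act) (τ : Act) (T : Transducer Q V) (q : Q)
    (α₁ α₂ : List V) : Prop :=
  ∀ a β, BigStep G τ T q α₁ a β ↔ BigStep G τ T q α₂ a β

/-- Consistency of an nfc-transducer with a BPA system (Definition 4.1). -/
def ConsistentWith {Q V Act : Type} (T : Transducer Q V) (G : BPA V Act) (τ : Act) : Prop :=
  (∀ A : V, T.out T.q0 [A] = [] → TApprox G τ T T.q0 [A] []) ∧
  (∀ (q : Q) (A : V), T.out q [A] ≠ [] → TApprox G τ T q [A] (T.out q [A])) ∧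
  (∀ (q : Q) (A C : V), T.out q [A, C] = [C] → T.out q [C] = [C] →
    TApprox G τ T q [A, C] [C])

section Semi

variable {S Act : Type} (tr : S → Act → S → Prop) (τ : Act)

/-- Zero or more τ-steps. -/
def TauStar (s t : S) : Prop := Relation.ReflTransGen (fun u v => tr u τ v) s t

/-- The one-sided matching condition of a semi-branching bisimulation. -/
def SemiMatch (B : S → S → Prop) (s t : S) : Prop :=
  ∀ a s', tr s a s' →
    ∃ th, TauStar tr τ t th ∧ B s th ∧
      ((a = τ ∧ B s' th) ∨ ∃ t', tr th a t' ∧ B s' t')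

/-- Semi-branching bisimulation. -/
def IsSemiBB (B : S → S → Prop) : Prop :=
  ∀ s t, B s t → SemiMatch tr τ B s t ∧ SemiMatch tr τ (fun u v => B v u) t s

/-- Semi-branching bisimilarity. -/
def SemiSim (s t : S) : Prop := ∃ B, IsSemiBB tr τ B ∧ B s t

variable {tr τ}

theorem semiMatch_mono {B B' : S → S → Prop} (hBB : ∀ u v, B u v → B' u v)
    {s t : S} (h : SemiMatch tr τ B s t) : SemiMatch tr τ B' s t := by
  intro a s' hstep
  obtain ⟨th, h1, h2, h3⟩ := h a s' hstep
  refine ⟨th, h1, hBB _ _ h2, ?_⟩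
  rcases h3 with ⟨ha, hb⟩ | ⟨t', ht1, ht2⟩
  · exact Or.inl ⟨ha, hBB _ _ hb⟩
  · exact Or.inr ⟨t', ht1, hBB _ _ ht2⟩

theorem isSemiBB_flip {B : S → S → Prop} (h : IsSemiBB tr τ B) :
    IsSemiBB tr τ (fun u v => B v u) := by
  intro s t hst
  exact ⟨(h t s hst).2, (h t s hst).1⟩

theorem tauSeq_star {B : S → S → Prop} {s t tk : S}
    (h : TauSeq tr τ B s t tk) : TauStar tr τ t tk ∧ (tk = t ∨ B s tk) := by
  induction h with
  | refl t => exact ⟨Relation.ReflTransGen.refl, Or.inl rfl⟩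
  | step h1 h2 _ ih =>
    refine ⟨Relation.ReflTransGen.head h1 ih.1, Or.inr ?_⟩
    rcases ih.2 with he | hm
    · exact he ▸ h2
    · exact hm

theorem bb_to_semi {B : S → S → Prop} (h : IsBranchingBisim tr τ B) :
    IsSemiBB tr τ B := by
  intro s t hst
  constructor
  · intro a s' hstep
    rcases (h s t hst).1 a s' hstep with ⟨ha, hb⟩ | ⟨tk, t', hseq, htk, ht'⟩
    · exact ⟨t, Relation.ReflTransGen.refl, hst, Or.inl ⟨ha, hb⟩⟩
    · obtain ⟨hstar, hor⟩ := tauSeq_star hseq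
      refine ⟨tk, hstar, ?_, Or.inr ⟨t', htk, ht'⟩⟩
      rcases hor with he | hm
      · exact he ▸ hst
      · exact hm
  · intro a t' hstep
    rcases (h s t hst).2 a t' hstep with ⟨ha, hb⟩ | ⟨sk, s', hseq, hsk, hs'⟩
    · exact ⟨s, Relation.ReflTransGen.refl, hst, Or.inl ⟨ha, hb⟩⟩
    · obtain ⟨hstar, hor⟩ := tauSeq_star hseq
      refine ⟨sk, hstar, ?_, Or.inr ⟨s', hsk, hs'⟩⟩
      rcases hor with he | hm
      · exact he ▸ hst
      · exact hm

theorem semiSim_isSemi : IsSemiBB tr τ (SemiSim tr τ) := by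
  intro s t ⟨B, hB, hst⟩
  constructor
  · exact semiMatch_mono (fun u v h => ⟨B, hB, h⟩) ((hB s t hst).1)
  · exact semiMatch_mono (fun u v h => ⟨B, hB, h⟩) ((hB s t hst).2)

/-- Propagation: the right side can follow a τ-path of the left side. -/
theorem semi_prop {B : S → S → Prop}
    (hB : ∀ s t, B s t → SemiMatch tr τ B s t) {u u' : S}
    (hstar : TauStar tr τ u u') :
    ∀ t, B u t → ∃ t', TauStar tr τ t t' ∧ B u' t' := by
  induction hstar using Relation.ReflTransGen.head_induction_on with
  | refl => exact fun t h => ⟨t, Relation.ReflTransGen.refl, h⟩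
  | head h1 _ ih =>
    intro t hBt
    obtain ⟨th, hs1, _, hor⟩ := hB _ _ hBt _ _ h1
    rcases hor with ⟨_, hb⟩ | ⟨t'', ht1, ht2⟩
    · obtain ⟨t', hs2, hB'⟩ := ih _ hb
      exact ⟨t', hs1.trans hs2, hB'⟩
    · obtain ⟨t', hs2, hB'⟩ := ih _ ht2
      exact ⟨t', (hs1.tail ht1).trans hs2, hB'⟩

def RComp (B₁ B₂ : S → S → Prop) (s t : S) : Prop := ∃ u, B₁ s u ∧ B₂ u t

theorem comp_fwd {B₁ B₂ : S → S → Prop}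
    (h₁ : ∀ s t, B₁ s t → SemiMatch tr τ B₁ s t)
    (h₂ : ∀ s t, B₂ s t → SemiMatch tr τ B₂ s t) :
    ∀ s t, RComp B₁ B₂ s t → SemiMatch tr τ (RComp B₁ B₂) s t := by
  rintro s t ⟨u, hu1, hu2⟩ a s' hstep
  obtain ⟨uh, hustar, huB, hor⟩ := h₁ s u hu1 a s' hstep
  obtain ⟨tt, htstar, htB⟩ := semi_prop h₂ hustar _ hu2
  rcases hor with ⟨ha, hb⟩ | ⟨u', hu'1, hu'2⟩
  · exact ⟨tt, htstar, ⟨uh, huB, htB⟩, Or.inl ⟨ha, uh, hb, htB⟩⟩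
  · obtain ⟨th, hs2, hB2, hor2⟩ := h₂ _ _ htB a u' hu'1
    rcases hor2 with ⟨ha, hb⟩ | ⟨t', ht1, ht2⟩
    · exact ⟨th, htstar.trans hs2, ⟨uh, huB, hB2⟩, Or.inl ⟨ha, u', hu'2, hb⟩⟩
    · exact ⟨th, htstar.trans hs2, ⟨uh, huB, hB2⟩, Or.inr ⟨t', ht1, u', hu'2, ht2⟩⟩

theorem isSemiBB_comp {B₁ B₂ : S → S → Prop}
    (h₁ : IsSemiBB tr τ B₁) (h₂ : IsSemiBB tr τ B₂) :
    IsSemiBB tr τ (RComp B₁ B₂) := by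
  intro s t hst
  constructor
  · exact comp_fwd (fun s t h => (h₁ s t h).1) (fun s t h => (h₂ s t h).1) s t hst
  · have := comp_fwd (tr := tr) (τ := τ) (B₁ := fun u v => B₂ v u) (B₂ := fun u v => B₁ v u)
      (fun s t h => (h₂ t s h).2) (fun s t h => (h₁ t s h).2) t s
      (by obtain ⟨u, h1, h2⟩ := hst; exact ⟨u, h2, h1⟩)
    exact semiMatch_mono (fun u v ⟨w, hw1, hw2⟩ => ⟨w, hw2, hw1⟩) this

/-- Stuttering: states on a τ-path between two states semi-similar to `s`
are themselves semi-similar to `s`. -/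
theorem semiSim_stutter {s t₀ t t₂ : S} (h₀ : SemiSim tr τ s t₀)
    (hs1 : TauStar tr τ t₀ t) (hs2 : TauStar tr τ t t₂)
    (h₂ : SemiSim tr τ s t₂) : SemiSim tr τ s t := by
  set M := SemiSim tr τ with hM
  have hMsemi : IsSemiBB tr τ M := semiSim_isSemi
  refine ⟨fun x y => M x y ∨ ∃ y₀ y₂, TauStar tr τ y₀ y ∧ TauStar tr τ y y₂ ∧
      M x y₀ ∧ M x y₂, ?_, Or.inr ⟨t₀, t₂, hs1, hs2, h₀, h₂⟩⟩
  intro x y hxy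
  rcases hxy with hxy | ⟨y₀, y₂, hst1, hst2, m₀, m₂⟩
  · exact ⟨semiMatch_mono (fun u v h => Or.inl h) ((hMsemi x y hxy).1),
      semiMatch_mono (fun u v h => Or.inl h) ((hMsemi x y hxy).2)⟩
  constructor
  · intro a x' hstep
    obtain ⟨th, hstar, hB, hor⟩ := (hMsemi x y₂ m₂).1 a x' hstep
    refine ⟨th, hst2.trans hstar, Or.inl hB, ?_⟩
    rcases hor with ⟨ha, hb⟩ | ⟨t', ht1, ht2⟩
    · exact Or.inl ⟨ha, Or.inl hb⟩
    · exact Or.inr ⟨t', ht1, Or.inl ht2⟩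
  · intro a y' hstep
    -- left side follows the τ-path y₀ →* y, then matches y → y'
    have hP : ∃ x₁, TauStar tr τ x x₁ ∧ M x₁ y := by
      have := semi_prop (tr := tr) (τ := τ) (B := fun u v => M v u)
        (fun s t h => (hMsemi t s h).2) hst1 x m₀
      obtain ⟨x₁, hx1, hx2⟩ := this
      exact ⟨x₁, hx1, hx2⟩
    obtain ⟨x₁, hx1star, hx1M⟩ := hP
    obtain ⟨xh, hxstar, hxB, hor⟩ := (hMsemi x₁ y hx1M).2 a y' hstep
    refine ⟨xh, hx1star.trans hxstar, Or.inl hxB, ?_⟩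
    rcases hor with ⟨ha, hb⟩ | ⟨x', hx'1, hx'2⟩
    · exact Or.inl ⟨ha, Or.inl hb⟩
    · exact Or.inr ⟨x', hx'1, Or.inl hx'2⟩

theorem semiSim_symm {s t : S} (h : SemiSim tr τ s t) : SemiSim tr τ t s := by
  obtain ⟨B, hB, hst⟩ := h
  exact ⟨fun u v => B v u, isSemiBB_flip hB, hst⟩

theorem tauSeq_mono {B B' : S → S → Prop} {s x y : S}
    (h : TauSeq tr τ B s x y) (hBB : ∀ u, B s u → B' s u) :
    TauSeq tr τ B' s x y := by
  induction h with
  | refl t => exact TauSeq.refl t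
  | step h1 h2 _ ih => exact TauSeq.step h1 (hBB _ h2) ih

theorem stutterSeq {s t c : S} (hst : SemiSim tr τ s t)
    (hstar : TauStar tr τ t c) (hsc : SemiSim tr τ s c) :
    TauSeq tr τ (SemiSim tr τ) s t c := by
  induction hstar using Relation.ReflTransGen.head_induction_on with
  | refl => exact TauSeq.refl c
  | @head x u h1 h2 ih =>
    have hu : SemiSim tr τ s u :=
      semiSim_stutter hst (Relation.ReflTransGen.single h1) h2 hsc
    exact TauSeq.step h1 hu (ih hu)

theorem semiSim_fwdBB {s t : S} (h : SemiSim tr τ s t) :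
    ∀ a s', tr s a s' →
      ((a = τ ∧ SemiSim tr τ s' t) ∨
        ∃ tk t', TauSeq tr τ (SemiSim tr τ) s t tk ∧ tr tk a t' ∧ SemiSim tr τ s' t') := by
  intro a s' hstep
  obtain ⟨th, hstar, hB, hor⟩ := (semiSim_isSemi (tr := tr) (τ := τ) s t h).1 a s' hstep
  rcases hor with ⟨ha, hb⟩ | ⟨t', ht1, ht2⟩
  · rcases Relation.ReflTransGen.cases_tail hstar with he | ⟨c, hc1, hc2⟩
    · exact Or.inl ⟨ha, he ▸ hb⟩
    · have hsc : SemiSim tr τ s c :=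
        semiSim_stutter h hc1 (Relation.ReflTransGen.single hc2) hB
      exact Or.inr ⟨c, th, stutterSeq h hc1 hsc, ha ▸ hc2, hb⟩
  · exact Or.inr ⟨th, t', stutterSeq h hstar hB, ht1, ht2⟩

theorem semiSim_isBB : IsBranchingBisim tr τ (SemiSim tr τ) := by
  intro s t h
  constructor
  · exact semiSim_fwdBB h
  · intro a t' hstep
    rcases semiSim_fwdBB (semiSim_symm h) a t' hstep with ⟨ha, hb⟩ | ⟨sk, s', hseq, hsk, hs'⟩
    · exact Or.inl ⟨ha, semiSim_symm hb⟩
    · exact Or.inr ⟨sk, s', tauSeq_mono hseq (fun u hu => semiSim_symm hu), hsk,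
        semiSim_symm hs'⟩

theorem bbisim_iff_semiSim {s t : S} : BBisim tr τ s t ↔ SemiSim tr τ s t :=
  ⟨fun ⟨B, hB, h⟩ => ⟨B, bb_to_semi hB, h⟩, fun h => ⟨SemiSim tr τ, semiSim_isBB, h⟩⟩

theorem BBisim.trans {s t u : S} (h₁ : BBisim tr τ s t) (h₂ : BBisim tr τ t u) :
    BBisim tr τ s u := by
  obtain ⟨B₁, hB₁, h1⟩ := h₁
  obtain ⟨B₂, hB₂, h2⟩ := h₂
  exact bbisim_iff_semiSim.2 ⟨RComp B₁ B₂,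
    isSemiBB_comp (bb_to_semi hB₁) (bb_to_semi hB₂), ⟨t, h1, h2⟩⟩

end Semi

section BPAlemmas
variable {V Act : Type} {G : BPA V Act} {τ : Act}

theorem BPA.tr_append {s t ρ : List V} {a : Act} (h : G.tr s a t) :
    G.tr (s ++ ρ) a (t ++ ρ) := by
  obtain ⟨A, γ, β, hr, rfl, rfl⟩ := h
  exact ⟨A, γ, β ++ ρ, hr, rfl, by simp⟩

theorem Steps.append_right {s t ρ : List V} {w : List Act} (h : Steps G.tr s w t) :
    Steps G.tr (s ++ ρ) w (t ++ ρ) := by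
  induction h with
  | refl s => exact Steps.refl _
  | step h1 _ ih => exact Steps.step (BPA.tr_append h1) ih

theorem Steps.trans' {S A' : Type} {tr : S → A' → S → Prop} {s t u : S}
    {w v : List A'} (h1 : Steps tr s w t) (h2 : Steps tr t v u) :
    Steps tr s (w ++ v) u := by
  induction h1 with
  | refl s => exact h2
  | step ha _ ih => exact Steps.step ha (ih h2)

theorem silent_nil : SilentState G.tr τ ([] : List V) := by
  intro w s' hsteps a ha
  cases hsteps with
  | refl => exact absurd ha List.not_mem_nil
  | step h1 h2 => obtain ⟨A, γ, β, _, h, _⟩ := h1; exact absurd h (by simp)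

theorem SilentState.of_step {S A' : Type} {tr : S → A' → S → Prop} {τ : A'}
    {s s' : S} {a : A'} (hs : SilentState tr τ s) (h : tr s a s') :
    a = τ ∧ SilentState tr τ s' := by
  constructor
  · exact hs [a] s' (Steps.step h (Steps.refl s')) a (by simp)
  · intro w t hsteps b hb
    exact hs (a :: w) t (Steps.step h hsteps) b (by simp [hb])

theorem silent_bbisim {S A' : Type} {tr : S → A' → S → Prop} {τ : A'}
    {s t : S} (hs : SilentState tr τ s) (ht : SilentState tr τ t) :
    BBisim tr τ s t := by
  refine ⟨fun u v => SilentState tr τ u ∧ SilentState tr τ v, ?_, hs, ht⟩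
  rintro u v ⟨hu, hv⟩
  constructor
  · intro a u' hstep
    obtain ⟨ha, hu'⟩ := hu.of_step hstep
    exact Or.inl ⟨ha, hu', hv⟩
  · intro a v' hstep
    obtain ⟨ha, hv'⟩ := hv.of_step hstep
    exact Or.inl ⟨ha, hu, hv'⟩

/-- From a normed system, every state has a path to the empty state. -/
theorem BPA.Normed.exists_steps (hG : G.Normed) (α : List V) :
    ∃ w, Steps G.tr α w [] := by
  induction α with
  | nil => exact ⟨[], Steps.refl _⟩
  | cons A β ih =>
    obtain ⟨w, hw⟩ := ih
    have h1 : ∃ w₁, Steps G.tr [A] w₁ [] := by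
      by_contra hc
      push_neg at hc
      have : {n : ℕ∞ | ∃ w : List Act, n = (w.length : ℕ∞) ∧ Steps G.tr [A] w []} = ∅ := by
        ext n; simp only [Set.mem_setOf_eq, Set.mem_empty_iff_false, iff_false]
        rintro ⟨w, _, hs⟩; exact hc w hs
      exact hG A (by simp [BPA.norm, this])
    obtain ⟨w₁, hw₁⟩ := h1
    have : Steps G.tr (A :: β) w₁ β := by
      have := hw₁.append_right (ρ := β); simpa using this
    exact ⟨w₁ ++ w, this.trans' hw⟩

theorem CCPath.trans' {S A' : Type} {tr : S → A' → S → Prop} {τ : A'}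
    {s t u : S} {m n : ℕ} (h1 : CCPath tr τ s m t) (h2 : CCPath tr τ t n u) :
    CCPath tr τ s (m + n) u := by
  induction h1 with
  | refl s => simpa using h2
  | stepEq ha hb _ ih => exact CCPath.stepEq ha hb (ih h2)
  | @stepNe s a s' k t ha hb _ ih =>
    have h' : k + 1 + n = k + n + 1 := by omega
    rw [h']
    exact CCPath.stepNe ha hb (ih h2)

theorem silent_ccpath {s : List V} (hs : SilentState G.tr τ s) {w : List Act} {u : List V}
    (hw : Steps G.tr s w u) : CCPath G.tr τ s 0 u := by
  induction hw with
  | refl s => exact CCPath.refl _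
  | @step s a s' w u h1 h2 ih =>
    obtain ⟨_, hs'⟩ := hs.of_step h1
    exact CCPath.stepEq h1 (silent_bbisim hs hs') (ih hs')

/-- A silent state reaches `[]` with no class changes. -/
theorem silent_ccpath_nil (hG : G.Normed) {t : List V} (ht : SilentState G.tr τ t) :
    CCPath G.tr τ t 0 ([] : List V) := by
  obtain ⟨w, hw⟩ := hG.exists_steps t
  exact silent_ccpath ht hw

/-- Key Lemma: descending past a nonempty prefix either costs a class change
or witnesses a bisimilarity with the suffix. -/
theorem descent_aux {s t : List V} {ℓ : ℕ} (h : CCPath G.tr τ s ℓ t) :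
    t = [] → ∀ η ρ : List V, s = η ++ ρ → η ≠ [] →
      ∃ ℓ₂, CCPath G.tr τ ρ ℓ₂ ([] : List V) ∧
        (ℓ₂ + 1 ≤ ℓ ∨ (ℓ₂ ≤ ℓ ∧ BBisim G.tr τ s ρ)) := by
  induction h with
  | refl s =>
    intro ht η ρ hs hη
    exact absurd (ht ▸ hs).symm (by simp [hη])
  | @stepEq s a s' n t h1 h2 h3 ih =>
    intro ht η ρ hs hη
    subst ht
    obtain ⟨A, η₁, rfl⟩ : ∃ A η₁, η = A :: η₁ := by
      cases η with
      | nil => exact absurd rfl hη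
      | cons A η₁ => exact ⟨A, η₁, rfl⟩
    obtain ⟨A', ξ, β, hr, he1, he2⟩ := h1
    have hA : A = A' ∧ η₁ ++ ρ = β := by
      rw [hs] at he1; simpa using he1
    by_cases hz : ξ ++ η₁ = []
    · have hs' : s' = ρ := by simp [he2, ← hA.2, ← List.append_assoc, hz]
      exact ⟨n, hs' ▸ h3, Or.inr ⟨le_refl n, hs' ▸ h2⟩⟩
    · have hs' : s' = (ξ ++ η₁) ++ ρ := by simp [he2, ← hA.2]
      obtain ⟨ℓ₂, hp, hor⟩ := ih rfl (ξ ++ η₁) ρ hs' hz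
      refine ⟨ℓ₂, hp, ?_⟩
      rcases hor with hlt | ⟨hle, hbb⟩
      · exact Or.inl hlt
      · exact Or.inr ⟨hle, BBisim.trans h2 hbb⟩
  | @stepNe s a s' n t h1 h2 h3 ih =>
    intro ht η ρ hs hη
    subst ht
    obtain ⟨A, η₁, rfl⟩ : ∃ A η₁, η = A :: η₁ := by
      cases η with
      | nil => exact absurd rfl hη
      | cons A η₁ => exact ⟨A, η₁, rfl⟩
    obtain ⟨A', ξ, β, hr, he1, he2⟩ := h1
    have hA : A = A' ∧ η₁ ++ ρ = β := by
      rw [hs] at he1; simpa using he1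
    by_cases hz : ξ ++ η₁ = []
    · have hs' : s' = ρ := by simp [he2, ← hA.2, ← List.append_assoc, hz]
      exact ⟨n, hs' ▸ h3, Or.inl (by omega)⟩
    · have hs' : s' = (ξ ++ η₁) ++ ρ := by simp [he2, ← hA.2]
      obtain ⟨ℓ₂, hp, hor⟩ := ih rfl (ξ ++ η₁) ρ hs' hz
      refine ⟨ℓ₂, hp, Or.inl ?_⟩
      rcases hor with hlt | ⟨hle, _⟩ <;> omega

/-- Iterated descent: a redundancy-free prefix costs at least its length. -/
theorem iter_descent (γ : List V) :
    ∀ (α : List V) (ℓ : ℕ), CCPath G.tr τ (α ++ γ) ℓ ([] : List V) →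
      (∀ (δ : List V) (X : V) (β : List V), α = δ ++ X :: β →
        ¬ BBisim G.tr τ (X :: (β ++ γ)) (β ++ γ)) →
      ∃ ℓ₂, CCPath G.tr τ γ ℓ₂ ([] : List V) ∧ α.length + ℓ₂ ≤ ℓ := by
  intro α
  induction α with
  | nil => exact fun ℓ h _ => ⟨ℓ, by simpa using h, by simp⟩
  | cons A β ih =>
    intro ℓ h hrf
    obtain ⟨ℓ', hp, hor⟩ := descent_aux h rfl (A :: []) (β ++ γ) (by simp) (by simp)
    have hstep : ℓ' + 1 ≤ ℓ := by
      rcases hor with h' | ⟨_, hbb⟩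
      · exact h'
      · exact absurd (by simpa using hbb) (hrf [] A β rfl)
    obtain ⟨ℓ₂, hp₂, hle₂⟩ := ih ℓ' hp
      (fun δ X β' hb => hrf (A :: δ) X β' (by simp [hb]))
    exact ⟨ℓ₂, hp₂, by simp only [List.length_cons]; omega⟩

end BPAlemmas

theorem ccNorm_ge_length_of_redFree_aux {V Act : Type} (G : BPA V Act) (τ : Act)
    (hG : G.Normed) (α γ : List V) (h : RedFreePrefix G τ α γ) :
    (α.length : ℕ∞) + ccNorm G.tr τ γ ≤ ccNorm G.tr τ (α ++ γ) := by
  refine le_sInf ?_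
  rintro n ⟨ℓ, rfl, t, hpath, hsilent⟩
  have hnil : CCPath G.tr τ (α ++ γ) (ℓ + 0) ([] : List V) :=
    hpath.trans' (silent_ccpath_nil hG hsilent)
  rw [Nat.add_zero] at hnil
  have hrf : ∀ (δ : List V) (X : V) (β : List V), α = δ ++ X :: β →
      ¬ BBisim G.tr τ (X :: (β ++ γ)) (β ++ γ) :=
    fun δ X β hb hbb => h ⟨δ, X, β, hb, hbb⟩
  obtain ⟨ℓ₂, hpγ, hle⟩ := iter_descent γ α ℓ hnil hrf
  have h1 : ccNorm G.tr τ γ ≤ (ℓ₂ : ℕ∞) :=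
    sInf_le ⟨ℓ₂, rfl, [], hpγ, silent_nil⟩
  calc (α.length : ℕ∞) + ccNorm G.tr τ γ ≤ (α.length : ℕ∞) + (ℓ₂ : ℕ∞) :=
        add_le_add le_rfl h1
    _ = ((α.length + ℓ₂ : ℕ) : ℕ∞) := by push_cast; rfl
    _ ≤ (ℓ : ℕ∞) := by exact_mod_cast hle

/-- if `α` is a redundancy-free prefix of `αγ`, then
`‖αγ‖_cc ≥ |α| + ‖γ‖_cc` (with `n + ω = ω`). -/
theorem ccNorm_ge_length_of_redFree {V Act : Type} (G : BPA V Act) (τ : Act)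
    (hG : G.Normed) (α γ : List V) (h : RedFreePrefix G τ α γ) :
    (α.length : ℕ∞) + ccNorm G.tr τ γ ≤ ccNorm G.tr τ (α ++ γ) :=
  ccNorm_ge_length_of_redFree_aux G τ hG α γ h
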